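/- Let ω : A × B → k be a non-degenerate Hopf pairing with inverse copairing ω' = Σ_i b_i ⊗ a_i ∈ B ⊗ A. Then: (1) the inverse copairing is unique, i.e. any element Σ_j c_j ⊗ d_j ∈ B ⊗ A satisfying the same two identities equals ω'; (2) ω' is a Hopf copairing, i.e. Σ_i (b_i)_{(1)} ⊗ (b_i)_{(2)} ⊗ a_i = Σ_{i,j} b_i ⊗ b_j ⊗ a_j a_i, Σ_i ε_B(b_i) a_i = 1_A, Σ_i b_i ⊗ (a_i)_{(1)} ⊗ (a_i)_{(2)} = Σ_{i,j} b_i b_j ⊗ a_j ⊗ a_i, and Σ_i ε_A(a_i) b_i = 1_B; (3) the Hopf pairings ω⁺(b,a) = ω(S_A(a), S_B(b)) and ω⁻(b,a) = ω(S_A⁻¹(a), S_B⁻¹(b)) (when the antipodes are bijective) are non-degenerate, with inverse copairings Σ_i S_A⁻¹(a_i) ⊗ S_B⁻¹(b_i) and Σ_i S_A(a_i) ⊗ S_B(b_i) respectively. -/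
import Mathlib


open TensorProduct

noncomputable section

variable {k : Type*} [Field k]

/-- A Hopf pairing between the Hopf algebras `A` and `B` over the field `k`. -/
structure IsHopfPairing {A B : Type*} [Ring A] [HopfAlgebra k A] [Ring B] [HopfAlgebra k B]
    (ω : A →ₗ[k] B →ₗ[k] k) : Prop where
  mul_left : ∀ (a a' : A) (b : B),
    ω (a * a') b =
      (LinearMap.mul' k k ∘ₗ TensorProduct.map (ω a') (ω a)) (Coalgebra.comul (R := k) b)
  one_left : ∀ b : B, ω 1 b = Coalgebra.counit (R := k) b
  mul_right : ∀ (a : A) (b b' : B),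
    ω a (b * b') =
      (LinearMap.mul' k k ∘ₗ TensorProduct.map (ω.flip b') (ω.flip b)) (Coalgebra.comul (R := k) a)
  one_right : ∀ a : A, ω a 1 = Coalgebra.counit (R := k) a

/-- The family `Σᵢ bᵢ ⊗ aᵢ` is an inverse copairing for the pairing `ω : A × B → k`,
i.e. `Σᵢ ω(x, bᵢ) aᵢ = x` for all `x ∈ A` and `Σᵢ ω(aᵢ, y) bᵢ = y` for all `y ∈ B`;
the existence of such a family is non-degeneracy of `ω`. -/
def IsInverseCopairing {A B : Type*} [Ring A] [HopfAlgebra k A] [Ring B] [HopfAlgebra k B]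
    (ω : A →ₗ[k] B →ₗ[k] k) {n : ℕ} (b : Fin n → B) (a : Fin n → A) : Prop :=
  (∀ x : A, ∑ i, ω x (b i) • a i = x) ∧ (∀ y : B, ∑ i, ω (a i) y • b i = y)

section Aux
variable {A B : Type*} [Ring A] [HopfAlgebra k A] [Ring B] [HopfAlgebra k B]
variable (ω : A →ₗ[k] B →ₗ[k] k)

def pairRight (y : B) : (B ⊗[k] B) ⊗[k] A →ₗ[k] B ⊗[k] B :=
  (TensorProduct.rid k (B ⊗[k] B)).toLinearMap ∘ₗ TensorProduct.map LinearMap.id (ω.flip y)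

@[simp] lemma pairRight_tmul (y : B) (v : B ⊗[k] B) (x : A) :
    pairRight ω y (v ⊗ₜ[k] x) = ω x y • v := by simp [pairRight]

def pairLeft (x : A) : B ⊗[k] (A ⊗[k] A) →ₗ[k] A ⊗[k] A :=
  (TensorProduct.lid k (A ⊗[k] A)).toLinearMap ∘ₗ TensorProduct.map (ω x) LinearMap.id

@[simp] lemma pairLeft_tmul (x : A) (y : B) (w : A ⊗[k] A) :
    pairLeft ω x (y ⊗ₜ[k] w) = ω x y • w := by simp [pairLeft]

variable {n : ℕ} (b : Fin n → B) (a : Fin n → A)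

lemma expand_right (hcop : IsInverseCopairing ω b a) (t : (B ⊗[k] B) ⊗[k] A) :
    ∑ i, (pairRight ω (b i) t) ⊗ₜ[k] a i = t := by
  induction t using TensorProduct.induction_on with
  | zero => simp
  | tmul v x =>
    calc ∑ i, (pairRight ω (b i) (v ⊗ₜ[k] x)) ⊗ₜ[k] a i
        = ∑ i, v ⊗ₜ[k] (ω x (b i) • a i) := by simp [smul_tmul]
      _ = v ⊗ₜ[k] x := by rw [← tmul_sum, hcop.1]
  | add u v hu hv => simp only [map_add, add_tmul, Finset.sum_add_distrib, hu, hv]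

lemma expand_left (hcop : IsInverseCopairing ω b a) (t : B ⊗[k] (A ⊗[k] A)) :
    ∑ i, (b i) ⊗ₜ[k] (pairLeft ω (a i) t) = t := by
  induction t using TensorProduct.induction_on with
  | zero => simp
  | tmul y w =>
    calc ∑ i, (b i) ⊗ₜ[k] (pairLeft ω (a i) (y ⊗ₜ[k] w))
        = ∑ i, (ω (a i) y • b i) ⊗ₜ[k] w := by simp [smul_tmul']
      _ = y ⊗ₜ[k] w := by rw [← sum_tmul, hcop.2]
  | add u v hu hv => simp only [map_add, tmul_add, Finset.sum_add_distrib, hu, hv]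

lemma pairRight_lhs (hcop : IsInverseCopairing ω b a) (y : B) :
    pairRight ω y (∑ i, (Coalgebra.comul (R := k) (b i)) ⊗ₜ[k] a i)
      = Coalgebra.comul (R := k) y := by
  rw [map_sum]
  simp only [pairRight_tmul]
  have h := congrArg (Coalgebra.comul (R := k)) (hcop.2 y)
  rw [map_sum] at h
  simpa using h

lemma pairRight_key (hcop : IsInverseCopairing ω b a) (z : B ⊗[k] B) :
    ∑ i, ∑ j, ((LinearMap.mul' k k ∘ₗ TensorProduct.map (ω (a i)) (ω (a j))) z)
      • ((b i) ⊗ₜ[k] (b j)) = z := by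
  induction z using TensorProduct.induction_on with
  | zero => simp
  | tmul y₁ y₂ =>
    have inner : ∀ i, ∑ j, (ω (a i) y₁ * ω (a j) y₂) • ((b i) ⊗ₜ[k] (b j))
        = (ω (a i) y₁ • b i) ⊗ₜ[k] y₂ := by
      intro i
      calc ∑ j, (ω (a i) y₁ * ω (a j) y₂) • ((b i) ⊗ₜ[k] (b j))
          = ∑ j, (ω (a i) y₁ • b i) ⊗ₜ[k] (ω (a j) y₂ • b j) := by
            refine Finset.sum_congr rfl fun j _ => ?_
            rw [mul_smul, ← tmul_smul, smul_tmul']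
        _ = (ω (a i) y₁ • b i) ⊗ₜ[k] y₂ := by rw [← tmul_sum, hcop.2]
    simp only [LinearMap.comp_apply, TensorProduct.map_tmul, LinearMap.mul'_apply,
      smul_eq_mul, inner]
    rw [← sum_tmul, hcop.2]
  | add u v hu hv =>
    simp only [map_add, add_smul, Finset.sum_add_distrib, hu, hv]

lemma pairRight_rhs (hω : IsHopfPairing ω) (hcop : IsInverseCopairing ω b a) (y : B) :
    pairRight ω y (∑ i, ∑ j, ((b i) ⊗ₜ[k] (b j)) ⊗ₜ[k] ((a j) * (a i)))
      = Coalgebra.comul (R := k) y := by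
  rw [map_sum]
  simp only [map_sum, pairRight_tmul]
  have : ∀ i j, ω (a j * a i) y
      = (LinearMap.mul' k k ∘ₗ TensorProduct.map (ω (a i)) (ω (a j)))
        (Coalgebra.comul (R := k) y) := fun i j => hω.mul_left (a j) (a i) y
  simp only [this]
  exact pairRight_key ω b a hcop _

lemma pairLeft_lhs (hcop : IsInverseCopairing ω b a) (x : A) :
    pairLeft ω x (∑ i, (b i) ⊗ₜ[k] (Coalgebra.comul (R := k) (a i)))
      = Coalgebra.comul (R := k) x := by
  rw [map_sum]
  simp only [pairLeft_tmul]
  have h := congrArg (Coalgebra.comul (R := k)) (hcop.1 x)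
  rw [map_sum] at h
  simpa using h

lemma pairLeft_key (hcop : IsInverseCopairing ω b a) (z : A ⊗[k] A) :
    ∑ i, ∑ j, ((LinearMap.mul' k k ∘ₗ TensorProduct.map (ω.flip (b j)) (ω.flip (b i))) z)
      • ((a j) ⊗ₜ[k] (a i)) = z := by
  induction z using TensorProduct.induction_on with
  | zero => simp
  | tmul x₁ x₂ =>
    have inner : ∀ i, ∑ j, (ω x₁ (b j) * ω x₂ (b i)) • ((a j) ⊗ₜ[k] (a i))
        = x₁ ⊗ₜ[k] (ω x₂ (b i) • a i) := by
      intro i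
      calc ∑ j, (ω x₁ (b j) * ω x₂ (b i)) • ((a j) ⊗ₜ[k] (a i))
          = ∑ j, (ω x₁ (b j) • a j) ⊗ₜ[k] (ω x₂ (b i) • a i) := by
            refine Finset.sum_congr rfl fun j _ => ?_
            rw [mul_smul, ← tmul_smul, smul_tmul']
        _ = x₁ ⊗ₜ[k] (ω x₂ (b i) • a i) := by rw [← sum_tmul, hcop.1]
    simp only [LinearMap.comp_apply, TensorProduct.map_tmul, LinearMap.mul'_apply,
      smul_eq_mul, LinearMap.flip_apply, inner]
    rw [← tmul_sum, hcop.1]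
  | add u v hu hv =>
    simp only [map_add, add_smul, Finset.sum_add_distrib, hu, hv]

lemma pairLeft_rhs (hω : IsHopfPairing ω) (hcop : IsInverseCopairing ω b a) (x : A) :
    pairLeft ω x (∑ i, ∑ j, ((b i) * (b j)) ⊗ₜ[k] ((a j) ⊗ₜ[k] (a i)))
      = Coalgebra.comul (R := k) x := by
  rw [map_sum]
  simp only [map_sum, pairLeft_tmul]
  have : ∀ i j, ω x (b i * b j)
      = (LinearMap.mul' k k ∘ₗ TensorProduct.map (ω.flip (b j)) (ω.flip (b i)))
        (Coalgebra.comul (R := k) x) := fun i j => hω.mul_right x (b i) (b j)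
  simp only [this]
  exact pairLeft_key ω b a hcop _

end Aux

/-- For a non-degenerate Hopf pairing `ω : A × B → k` with inverse
copairing `ω' = Σᵢ bᵢ ⊗ aᵢ`: (1) the inverse copairing is unique as an element of
`B ⊗ A`; (2) it is a Hopf copairing; (3) the Hopf pairings
`ω⁺(b,a) = ω(S_A a, S_B b)` and `ω⁻(b,a) = ω(S_A⁻¹ a, S_B⁻¹ b)` are non-degenerate,
with inverse copairings `Σᵢ S_A⁻¹(aᵢ) ⊗ S_B⁻¹(bᵢ)` and `Σᵢ S_A(aᵢ) ⊗ S_B(bᵢ)`. -/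

theorem inverse_copairing_properties {A B : Type*} [Ring A] [HopfAlgebra k A] [Ring B]
    [HopfAlgebra k B] (ω : A →ₗ[k] B →ₗ[k] k) (hω : IsHopfPairing ω)
    {n : ℕ} (b : Fin n → B) (a : Fin n → A) (hcop : IsInverseCopairing ω b a)
    (SA' : A →ₗ[k] A) (SB' : B →ₗ[k] B)
    (hSA : SA' ∘ₗ HopfAlgebra.antipode (R := k) = LinearMap.id ∧
      HopfAlgebra.antipode (R := k) ∘ₗ SA' = LinearMap.id)
    (hSB : SB' ∘ₗ HopfAlgebra.antipode (R := k) = LinearMap.id ∧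
      HopfAlgebra.antipode (R := k) ∘ₗ SB' = LinearMap.id)
    (ωplus ωminus : B →ₗ[k] A →ₗ[k] k)
    (hplus : ∀ (y : B) (x : A),
      ωplus y x = ω (HopfAlgebra.antipode (R := k) x) (HopfAlgebra.antipode (R := k) y))
    (hminus : ∀ (y : B) (x : A), ωminus y x = ω (SA' x) (SB' y)) :
    -- (1) uniqueness of the inverse copairing
    (∀ {m : ℕ} (c : Fin m → B) (d : Fin m → A), IsInverseCopairing ω c d →
      ∑ i, b i ⊗ₜ[k] a i = ∑ j, c j ⊗ₜ[k] d j)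
    -- (2) the inverse copairing is a Hopf copairing
    ∧ (∑ i, (Coalgebra.comul (R := k) (b i)) ⊗ₜ[k] (a i)
        = ∑ i, ∑ j, ((b i) ⊗ₜ[k] (b j)) ⊗ₜ[k] ((a j) * (a i)))
    ∧ (∑ i, Coalgebra.counit (R := k) (b i) • a i = (1 : A))
    ∧ (∑ i, (b i) ⊗ₜ[k] (Coalgebra.comul (R := k) (a i))
        = ∑ i, ∑ j, ((b i) * (b j)) ⊗ₜ[k] ((a j) ⊗ₜ[k] (a i)))
    ∧ (∑ i, Coalgebra.counit (R := k) (a i) • b i = (1 : B))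
    -- (3) `ω⁺` and `ω⁻` are non-degenerate with the indicated inverse copairings
    ∧ IsInverseCopairing ωplus (fun i => SA' (a i)) (fun i => SB' (b i))
    ∧ IsInverseCopairing ωminus (fun i => HopfAlgebra.antipode (R := k) (a i))
        (fun i => HopfAlgebra.antipode (R := k) (b i)) := by
  have hSA1 : ∀ x : A, SA' (HopfAlgebra.antipode (R := k) x) = x :=
    fun x => LinearMap.congr_fun hSA.1 x
  have hSA2 : ∀ x : A, HopfAlgebra.antipode (R := k) (SA' x) = x :=
    fun x => LinearMap.congr_fun hSA.2 x
  have hSB1 : ∀ y : B, SB' (HopfAlgebra.antipode (R := k) y) = y :=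
    fun y => LinearMap.congr_fun hSB.1 y
  have hSB2 : ∀ y : B, HopfAlgebra.antipode (R := k) (SB' y) = y :=
    fun y => LinearMap.congr_fun hSB.2 y
  refine ⟨?_, ?_, ?_, ?_, ?_, ⟨?_, ?_⟩, ⟨?_, ?_⟩⟩
  · -- (1) uniqueness
    intro m c d hcd
    calc ∑ i, b i ⊗ₜ[k] a i
        = ∑ i, ∑ j, ω (a i) (c j) • ((b i) ⊗ₜ[k] d j) := by
          refine Finset.sum_congr rfl fun i _ => ?_
          have h : b i ⊗ₜ[k] a i = b i ⊗ₜ[k] (∑ j, ω (a i) (c j) • d j) := by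
            rw [hcd.1 (a i)]
          rw [h, tmul_sum]
          simp [tmul_smul]
      _ = ∑ j, (∑ i, ω (a i) (c j) • b i) ⊗ₜ[k] d j := by
          rw [Finset.sum_comm]
          refine Finset.sum_congr rfl fun j _ => ?_
          rw [sum_tmul]
          exact Finset.sum_congr rfl fun i _ => (smul_tmul' _ _ _).symm
      _ = ∑ j, c j ⊗ₜ[k] d j := by
          refine Finset.sum_congr rfl fun j _ => ?_
          rw [hcop.2 (c j)]
  · -- (2a) comul on the B side
    have e1 := expand_right ω b a hcop (∑ i, (Coalgebra.comul (R := k) (b i)) ⊗ₜ[k] a i)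
    have e2 := expand_right ω b a hcop
      (∑ i, ∑ j, ((b i) ⊗ₜ[k] (b j)) ⊗ₜ[k] ((a j) * (a i)))
    rw [← e1, ← e2]
    refine Finset.sum_congr rfl fun i _ => ?_
    rw [pairRight_lhs ω b a hcop, pairRight_rhs ω b a hω hcop]
  · -- (2b) counit on the B side
    simp_rw [← hω.one_left]
    exact hcop.1 1
  · -- (2c) comul on the A side
    have e1 := expand_left ω b a hcop (∑ i, (b i) ⊗ₜ[k] (Coalgebra.comul (R := k) (a i)))
    have e2 := expand_left ω b a hcop
      (∑ i, ∑ j, ((b i) * (b j)) ⊗ₜ[k] ((a j) ⊗ₜ[k] (a i)))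
    rw [← e1, ← e2]
    refine Finset.sum_congr rfl fun i _ => ?_
    rw [pairLeft_lhs ω b a hcop, pairLeft_rhs ω b a hω hcop]
  · -- (2d) counit on the A side
    simp_rw [← hω.one_right]
    exact hcop.2 1
  · -- (3) ωplus, first identity
    intro x
    simp_rw [hplus, hSA2]
    have h : ∑ i, ω (a i) (HopfAlgebra.antipode (R := k) x) • SB' (b i)
        = SB' (∑ i, ω (a i) (HopfAlgebra.antipode (R := k) x) • b i) := by
      rw [map_sum]; simp
    rw [h, hcop.2, hSB1]
  · -- (3) ωplus, second identity
    intro y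
    simp_rw [hplus, hSB2]
    have h : ∑ i, ω (HopfAlgebra.antipode (R := k) y) (b i) • SA' (a i)
        = SA' (∑ i, ω (HopfAlgebra.antipode (R := k) y) (b i) • a i) := by
      rw [map_sum]; simp
    rw [h, hcop.1, hSA1]
  · -- (3) ωminus, first identity
    intro x
    simp_rw [hminus, hSA1]
    have h : ∑ i, ω (a i) (SB' x) • HopfAlgebra.antipode (R := k) (b i)
        = HopfAlgebra.antipode (R := k) (∑ i, ω (a i) (SB' x) • b i) := by
      rw [map_sum]; simp
    rw [h, hcop.2, hSB2]
  · -- (3) ωminus, second identity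
    intro y
    simp_rw [hminus, hSB1]
    have h : ∑ i, ω (SA' y) (b i) • HopfAlgebra.antipode (R := k) (a i)
        = HopfAlgebra.antipode (R := k) (∑ i, ω (SA' y) (b i) • a i) := by
      rw [map_sum]; simp
    rw [h, hcop.1, hSA2]

end
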